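/- arXiv:2605.30066 — 3 statements merged into one kernel-verified Lean document; each statement's English description precedes it below -/
import Mathlib

section
/- Let (X,T) and (Y,S) be minimal systems with (X,T) equicontinuous. Then for any x ∈ X and y ∈ Y, the set {x} × RP[y] is contained in the orbit closure of (x,y) under T×S, where RP[y] = {y' ∈ Y : (y,y') ∈ RP(Y)}. -/
open Filter Topology Set

/-- A map between topological spaces is *semiopen* if the image of every
nonempty open set has nonempty interior. -/
def SemiOpen {X Y : Type*} [TopologicalSpace X] [TopologicalSpace Y] (f : X → Y) : Prop :=
  ∀ U : Set X, IsOpen U → U.Nonempty → (interior (f '' U)).Nonempty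

/-- The `n`-th iterate (`n : ℤ`) of a homeomorphism. -/
def zIter {X : Type*} [TopologicalSpace X] (T : X ≃ₜ X) (n : ℤ) : X → X :=
  fun x => (T.toEquiv ^ n) x

/-- The two-sided orbit of a point under a homeomorphism. -/
def zOrbit {X : Type*} [TopologicalSpace X] (T : X ≃ₜ X) (x : X) : Set X :=
  Set.range fun n : ℤ => zIter T n x

/-- A system is minimal if every orbit is dense. -/
def IsMinimalSystem {X : Type*} [TopologicalSpace X] (T : X ≃ₜ X) : Prop :=
  ∀ x : X, Dense (zOrbit T x)

/-- A minimal subset: nonempty, closed, invariant, with no proper nonempty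
closed invariant subset. -/
def IsMinimalSubset {X : Type*} [TopologicalSpace X] (T : X ≃ₜ X) (M : Set X) : Prop :=
  M.Nonempty ∧ IsClosed M ∧ T '' M = M ∧
    ∀ M' ⊆ M, M'.Nonempty → IsClosed M' → T '' M' = M' → M' = M

/-- A factor map between systems. -/
def IsFactorMap {X Y : Type*} [TopologicalSpace X] [TopologicalSpace Y]
    (T : X ≃ₜ X) (S : Y ≃ₜ Y) (f : X → Y) : Prop :=
  Continuous f ∧ Function.Surjective f ∧ ∀ x, f (T x) = S (f x)

/-- The regionally proximal relation. -/
def RP {X : Type*} [MetricSpace X] (T : X ≃ₜ X) : Set (X × X) :=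
  {p | ∃ (u v : ℕ → X) (n : ℕ → ℤ),
    Tendsto u atTop (𝓝 p.1) ∧ Tendsto v atTop (𝓝 p.2) ∧
    Tendsto (fun i => dist (zIter T (n i) (u i)) (zIter T (n i) (v i))) atTop (𝓝 0)}

/-- A joining of two systems: a closed invariant subset of the product with
full projections onto both coordinates. -/
def IsJoining {X Y : Type*} [TopologicalSpace X] [TopologicalSpace Y]
    (T : X ≃ₜ X) (S : Y ≃ₜ Y) (J : Set (X × Y)) : Prop :=
  IsClosed J ∧ (T.prodCongr S) '' J = J ∧
    Prod.fst '' J = Set.univ ∧ Prod.snd '' J = Set.univ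

/-- `J` projects onto `X_eq × Y_eq`: phrased via the regionally proximal
relation, every product of RP-cells meets `J`. -/
def FullEqProjection {X Y : Type*} [MetricSpace X] [MetricSpace Y]
    (T : X ≃ₜ X) (S : Y ≃ₜ Y) (J : Set (X × Y)) : Prop :=
  ∀ x : X, ∀ y : Y, ∃ p ∈ J, (x, p.1) ∈ RP T ∧ (y, p.2) ∈ RP S

/-- Two minimal systems are quasi-disjoint if the full product is the only
joining projecting onto the product of the maximal equicontinuous factors. -/
def QuasiDisjoint {X Y : Type*} [MetricSpace X] [MetricSpace Y]
    (T : X ≃ₜ X) (S : Y ≃ₜ Y) : Prop :=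
  ∀ J : Set (X × Y), IsJoining T S J → FullEqProjection T S J → J = Set.univ

/-- Two systems are disjoint if the full product is the only joining. -/
def DisjointSystems {X Y : Type*} [TopologicalSpace X] [TopologicalSpace Y]
    (T : X ≃ₜ X) (S : Y ≃ₜ Y) : Prop :=
  ∀ J : Set (X × Y), IsJoining T S J → J = Set.univ

/-- A system is equicontinuous (with respect to all integer iterates). -/
def EquicontinuousSystem {X : Type*} [MetricSpace X] (T : X ≃ₜ X) : Prop :=
  ∀ ε > (0 : ℝ), ∃ δ > (0 : ℝ), ∀ x₁ x₂ : X, dist x₁ x₂ < δ →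
    ∀ n : ℤ, dist (zIter T n x₁) (zIter T n x₂) < ε

/-- A pair of points is proximal. -/
def ProximalPair {X : Type*} [MetricSpace X] (T : X ≃ₜ X) (x₁ x₂ : X) : Prop :=
  ∀ ε > (0 : ℝ), ∃ n : ℤ, dist (zIter T n x₁) (zIter T n x₂) < ε

set_option linter.unusedSectionVars false

namespace S16
variable {X : Type*} [TopologicalSpace X] (T : X ≃ₜ X)
theorem zIter_add (m n : ℤ) (a : X) : zIter T (m + n) a = zIter T m (zIter T n a) := by
  simp [zIter, zpow_add, Equiv.Perm.mul_apply]
theorem zIter_zero (a : X) : zIter T 0 a = a := by simp [zIter]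
theorem zIter_one (a : X) : zIter T 1 a = T a := by simp [zIter]
theorem zIter_neg_cancel (n : ℤ) (a : X) : zIter T n (zIter T (-n) a) = a := by
  rw [← zIter_add]; simp [zIter]
theorem continuous_zIter (n : ℤ) : Continuous (zIter T n) := by
  induction n using Int.induction_on with
  | zero => simpa [funext (zIter_zero T)] using continuous_id'
  | succ k ih =>
      have : zIter T (k + 1) = fun a => T (zIter T k a) := by
        funext a; rw [add_comm, zIter_add, zIter_one]
      rw [this]; exact T.continuous.comp ih
  | pred k ih =>
      have : zIter T (-k - 1) = fun a => zIter T (-k) (T.symm a) := by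
        funext a
        have : (-k - 1 : ℤ) = -k + -1 := by ring
        rw [this, zIter_add]
        rfl
      rw [this]; exact ih.comp T.symm.continuous

end S16

namespace S16
variable {X : Type*} [MetricSpace X] [CompactSpace X] (T : X ≃ₜ X)

noncomputable def D (a b : X) : ℝ := ⨆ n : ℤ, dist (zIter T n a) (zIter T n b)

theorem exists_bound : ∃ C:ℝ, ∀ a b : X, dist a b ≤ C := by
  obtain ⟨C, hC⟩ := Metric.isBounded_iff.1 (isCompact_univ (X := X)).isBounded
  exact ⟨C, fun a b => hC (mem_univ a) (mem_univ b)⟩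

theorem bddD (a b : X) : BddAbove (range fun n : ℤ => dist (zIter T n a) (zIter T n b)) := by
  obtain ⟨C, hC⟩ := exists_bound (X := X)
  exact ⟨C, by rintro r ⟨n, rfl⟩; exact hC _ _⟩

theorem dist_le_D (a b : X) : dist a b ≤ D T a b := by
  have := le_ciSup (bddD T a b) (0 : ℤ)
  simpa [zIter_zero, D] using this

theorem D_nonneg (a b : X) : 0 ≤ D T a b := le_trans dist_nonneg (dist_le_D T a b)

theorem D_le (a b : X) (c : ℝ) (h : ∀ n : ℤ, dist (zIter T n a) (zIter T n b) ≤ c) :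
    D T a b ≤ c := ciSup_le h

theorem term_le_D (a b : X) (n : ℤ) : dist (zIter T n a) (zIter T n b) ≤ D T a b :=
  le_ciSup (bddD T a b) n

theorem D_symm (a b : X) : D T a b = D T b a := by
  unfold D; congr 1; funext n; exact dist_comm _ _

theorem D_triangle (a b c : X) : D T a c ≤ D T a b + D T b c :=
  D_le T a c _ (fun n => le_trans (dist_triangle _ (zIter T n b) _)
    (add_le_add (term_le_D T a b n) (term_le_D T b c n)))

theorem D_iter (a b : X) (m : ℤ) : D T (zIter T m a) (zIter T m b) = D T a b := by
  apply le_antisymm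
  · apply D_le; intro n
    rw [← zIter_add, ← zIter_add]; exact term_le_D T a b (n + m)
  · apply D_le; intro n
    have := term_le_D T (zIter T m a) (zIter T m b) (n + -m)
    rwa [← zIter_add, ← zIter_add, add_assoc, neg_add_cancel, add_zero] at this

theorem D_small (heq : EquicontinuousSystem T) {ε : ℝ} (hε : 0 < ε) :
    ∃ δ > (0:ℝ), ∀ a b : X, dist a b < δ → D T a b ≤ ε := by
  obtain ⟨δ, hδ, h⟩ := heq ε hε
  exact ⟨δ, hδ, fun a b hab => D_le T a b ε (fun n => (h a b hab n).le)⟩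

theorem D_le_of_tendsto {c : ℝ} {p L : X} (q : ℕ → X) (hq : Tendsto q atTop (𝓝 L))
    (h : ∀ k, D T p (q k) ≤ c) : D T p L ≤ c := by
  apply D_le; intro n
  have h1 : Tendsto (fun k => dist (zIter T n p) (zIter T n (q k))) atTop
      (𝓝 (dist (zIter T n p) (zIter T n L))) :=
    (Continuous.dist continuous_const (continuous_zIter T n)).continuousAt.tendsto.comp hq
  exact le_of_tendsto h1 (Eventually.of_forall fun k => le_trans (term_le_D T p (q k) n) (h k))

theorem exists_orbit_close (hX : IsMinimalSystem T) (x g : X) {ε : ℝ} (hε : 0 < ε) :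
    ∃ n : ℤ, dist (zIter T n x) g < ε := by
  have := (Metric.mem_closure_iff).1 ((hX x).closure_eq ▸ mem_univ g)
  obtain ⟨b, ⟨n, rfl⟩, hb⟩ := this ε hε
  exact ⟨n, by rwa [dist_comm]⟩

theorem exists_orbit_Dclose (heq : EquicontinuousSystem T) (hX : IsMinimalSystem T)
    (x g : X) {ε : ℝ} (hε : 0 < ε) : ∃ n : ℤ, D T (zIter T n x) g ≤ ε := by
  obtain ⟨δ, hδ, hs⟩ := D_small T heq hε
  obtain ⟨n, hn⟩ := exists_orbit_close T hX x g hδ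
  exact ⟨n, hs _ _ hn⟩

/-- Key identity: `D (T^k h) h = D (T^k x) x` for all `h`, when the orbit of `x` is dense. -/
theorem D_base (heq : EquicontinuousSystem T) (hX : IsMinimalSystem T) (x h : X) (k : ℤ) :
    D T (zIter T k h) h = D T (zIter T k x) x := by
  have main : ∀ g g' : X, D T (zIter T k g) g ≤ D T (zIter T k g') g' + 2 * D T g g' := by
    intro g g'
    have h1 : D T (zIter T k g) (zIter T k g') = D T g g' := D_iter T g g' k
    calc D T (zIter T k g) g ≤ D T (zIter T k g) (zIter T k g') + D T (zIter T k g') g :=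
          D_triangle T _ _ _
      _ ≤ D T g g' + (D T (zIter T k g') g' + D T g' g) := by
          rw [h1]; exact add_le_add_right (D_triangle T _ _ _) _
      _ = D T (zIter T k g') g' + 2 * D T g g' := by rw [D_symm T g' g]; ring
  apply le_antisymm
  · apply le_of_forall_pos_le_add; intro ε hε
    obtain ⟨m, hm⟩ := exists_orbit_Dclose T heq hX x h (by linarith : (0:ℝ) < ε/2)
    have h2 : D T (zIter T k (zIter T m x)) (zIter T m x) = D T (zIter T k x) x := by
      rw [← zIter_add, add_comm k m, zIter_add, D_iter]
    calc D T (zIter T k h) h ≤ D T (zIter T k (zIter T m x)) (zIter T m x)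
          + 2 * D T h (zIter T m x) := main h (zIter T m x)
      _ ≤ D T (zIter T k x) x + 2 * (ε/2) := by
          rw [h2]; have := D_symm T h (zIter T m x) ▸ hm;
          apply add_le_add_right; rw [D_symm T h (zIter T m x)]; linarith [hm]
      _ = D T (zIter T k x) x + ε := by ring
  · apply le_of_forall_pos_le_add; intro ε hε
    obtain ⟨m, hm⟩ := exists_orbit_Dclose T heq hX x h (by linarith : (0:ℝ) < ε/2)
    have h2 : D T (zIter T k (zIter T m x)) (zIter T m x) = D T (zIter T k x) x := by
      rw [← zIter_add, add_comm k m, zIter_add, D_iter]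
    calc D T (zIter T k x) x = D T (zIter T k (zIter T m x)) (zIter T m x) := h2.symm
      _ ≤ D T (zIter T k h) h + 2 * D T (zIter T m x) h := main _ _
      _ ≤ D T (zIter T k h) h + ε := by linarith [hm]

/-- `D (T^n h) (T^m h) = D (T^n x) (T^m x)`. -/
theorem D_pair (heq : EquicontinuousSystem T) (hX : IsMinimalSystem T) (x h : X) (n m : ℤ) :
    D T (zIter T n h) (zIter T m h) = D T (zIter T n x) (zIter T m x) := by
  have e1 : ∀ g : X, D T (zIter T n g) (zIter T m g) = D T (zIter T (n - m) g) g := by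
    intro g
    have : zIter T n g = zIter T m (zIter T (n - m) g) := by
      rw [← zIter_add]; congr 1; ring
    rw [this, ← D_iter T (zIter T (n-m) g) g m]
  rw [e1, e1, D_base T heq hX x h]


open Classical in
noncomputable def phi (x g : X) (j : ℕ) : ℤ :=
  if h : ∃ n : ℤ, dist (zIter T n x) g < 1/(j+1) then h.choose else 0

theorem one_div_succ_pos (j : ℕ) : (0:ℝ) < 1/(j+1) := by positivity

theorem phi_spec (hX : IsMinimalSystem T) (x g : X) (j : ℕ) :
    dist (zIter T (phi T x g j) x) g < 1/(j+1) := by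
  have h := exists_orbit_close T hX x g (one_div_succ_pos j)
  rw [phi, dif_pos h]
  exact h.choose_spec

theorem eventually_small (f : ℕ → ℝ) (hf : ∀ j, f j < 1/(j+1)) {δ : ℝ} (hδ : 0 < δ) :
    ∃ N, ∀ j ≥ N, f j < δ := by
  obtain ⟨N, hN⟩ := exists_nat_one_div_lt hδ
  refine ⟨N, fun j hj => lt_trans (lt_of_lt_of_le (hf j) ?_) hN⟩
  apply one_div_le_one_div_of_le (by positivity)
  exact_mod_cast (by exact_mod_cast Nat.succ_le_succ hj : (N:ℝ)+1 ≤ (j:ℝ)+1)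

theorem phi_Dspec (heq : EquicontinuousSystem T) (hX : IsMinimalSystem T) (x g : X)
    {ε : ℝ} (hε : 0 < ε) : ∃ N, ∀ j ≥ N, D T (zIter T (phi T x g j) x) g ≤ ε := by
  obtain ⟨δ, hδ, hs⟩ := D_small T heq hε
  obtain ⟨N, hN⟩ := eventually_small (fun j => dist (zIter T (phi T x g j) x) g)
    (phi_spec T hX x g) hδ
  exact ⟨N, fun j hj => hs _ _ (hN j hj)⟩

noncomputable def RtSeq (x h g : X) (j : ℕ) : X := zIter T (phi T x g j) h

theorem RtSeq_D_cauchy (heq : EquicontinuousSystem T) (hX : IsMinimalSystem T) (x h g : X)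
    {ε : ℝ} (hε : 0 < ε) : ∃ N, ∀ j ≥ N, ∀ k ≥ N,
      D T (RtSeq T x h g j) (RtSeq T x h g k) ≤ ε := by
  obtain ⟨N, hN⟩ := phi_Dspec T heq hX x g (half_pos hε)
  refine ⟨N, fun j hj k hk => ?_⟩
  have e1 : D T (RtSeq T x h g j) (RtSeq T x h g k)
      = D T (zIter T (phi T x g j) x) (zIter T (phi T x g k) x) :=
    D_pair T heq hX x h _ _
  rw [e1]
  calc D T (zIter T (phi T x g j) x) (zIter T (phi T x g k) x)
      ≤ D T (zIter T (phi T x g j) x) g + D T g (zIter T (phi T x g k) x) := D_triangle T _ _ _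
    _ ≤ ε/2 + ε/2 := add_le_add (hN j hj) (by rw [D_symm]; exact hN k hk)
    _ = ε := by ring

theorem RtSeq_cauchy (heq : EquicontinuousSystem T) (hX : IsMinimalSystem T) (x h g : X) :
    CauchySeq (RtSeq T x h g) := by
  rw [Metric.cauchySeq_iff]
  intro ε hε
  obtain ⟨N, hN⟩ := RtSeq_D_cauchy T heq hX x h g (half_pos hε)
  refine ⟨N, fun j hj k hk => ?_⟩
  calc dist (RtSeq T x h g j) (RtSeq T x h g k) ≤ D T _ _ := dist_le_D T _ _
    _ ≤ ε/2 := hN j hj k hk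
    _ < ε := by linarith

open Classical in
noncomputable def Rt (x h g : X) : X :=
  if H : ∃ L, Tendsto (RtSeq T x h g) atTop (𝓝 L) then H.choose else h

theorem Rt_tendsto (heq : EquicontinuousSystem T) (hX : IsMinimalSystem T) (x h g : X) :
    Tendsto (RtSeq T x h g) atTop (𝓝 (Rt T x h g)) := by
  have H : ∃ L, Tendsto (RtSeq T x h g) atTop (𝓝 L) :=
    cauchySeq_tendsto_of_complete (RtSeq_cauchy T heq hX x h g)
  rw [Rt, dif_pos H]
  exact H.choose_spec

theorem Rt_approx (heq : EquicontinuousSystem T) (hX : IsMinimalSystem T) (x h g : X)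
    {ε : ℝ} (hε : 0 < ε) : ∃ N, ∀ j ≥ N, D T (RtSeq T x h g j) (Rt T x h g) ≤ ε := by
  obtain ⟨N, hN⟩ := RtSeq_D_cauchy T heq hX x h g hε
  refine ⟨N, fun j hj => ?_⟩
  apply D_le_of_tendsto T (fun k => RtSeq T x h g (k + N))
  · exact (Rt_tendsto T heq hX x h g).comp (tendsto_add_atTop_nat N)
  · exact fun k => hN j hj (k + N) (Nat.le_add_left N k)

/-- Helper: if the defining sequence tends to `L`, then `Rt = L`. -/
theorem Rt_eq_of_tendsto (heq : EquicontinuousSystem T) (hX : IsMinimalSystem T) (x h g L : X)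
    (hL : Tendsto (RtSeq T x h g) atTop (𝓝 L)) : Rt T x h g = L :=
  tendsto_nhds_unique (Rt_tendsto T heq hX x h g) hL

theorem Rt_x (heq : EquicontinuousSystem T) (hX : IsMinimalSystem T) (x h : X) :
    Rt T x h x = h := by
  apply Rt_eq_of_tendsto T heq hX
  rw [Metric.tendsto_atTop]
  intro ε hε
  obtain ⟨N, hN⟩ := phi_Dspec T heq hX x x (half_pos hε)
  refine ⟨N, fun j hj => ?_⟩
  have : D T (RtSeq T x h x j) h = D T (zIter T (phi T x x j) x) x := by
    have := D_pair T heq hX x h (phi T x x j) 0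
    rwa [zIter_zero, zIter_zero] at this
  calc dist (RtSeq T x h x j) h ≤ D T _ _ := dist_le_D T _ _
    _ = D T (zIter T (phi T x x j) x) x := this
    _ ≤ ε/2 := hN j hj
    _ < ε := by linarith

theorem Rt_one (heq : EquicontinuousSystem T) (hX : IsMinimalSystem T) (x g : X) :
    Rt T x x g = g := by
  apply Rt_eq_of_tendsto T heq hX
  rw [Metric.tendsto_atTop]
  intro ε hε
  obtain ⟨N, hN⟩ := eventually_small (fun j => dist (zIter T (phi T x g j) x) g)
    (phi_spec T hX x g) hε
  exact ⟨N, fun j hj => hN j hj⟩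

theorem Rt_zIter (heq : EquicontinuousSystem T) (hX : IsMinimalSystem T) (x h g : X) (n : ℤ) :
    Rt T x h (zIter T n g) = zIter T n (Rt T x h g) := by
  apply Rt_eq_of_tendsto T heq hX
  rw [Metric.tendsto_atTop]
  intro ε hε
  have hε4 : 0 < ε/4 := by linarith
  obtain ⟨N₁, hN₁⟩ := phi_Dspec T heq hX x (zIter T n g) hε4
  obtain ⟨N₂, hN₂⟩ := phi_Dspec T heq hX x g hε4
  obtain ⟨N₃, hN₃⟩ := Rt_approx T heq hX x h g hε4
  set k := max N₂ N₃ with hk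
  refine ⟨N₁, fun j hj => ?_⟩
  have e0 : zIter T n (RtSeq T x h g k) = zIter T (n + phi T x g k) h := by
    rw [RtSeq, ← zIter_add]
  have c1 : D T (RtSeq T x h (zIter T n g) j) (zIter T n (RtSeq T x h g k))
      = D T (zIter T (phi T x (zIter T n g) j) x) (zIter T (n + phi T x g k) x) := by
    rw [e0]; exact D_pair T heq hX x h _ _
  have c2 : D T (zIter T n g) (zIter T (n + phi T x g k) x) = D T g (zIter T (phi T x g k) x) := by
    rw [zIter_add]; exact D_iter T _ _ n
  have step1 : D T (RtSeq T x h (zIter T n g) j) (zIter T n (RtSeq T x h g k)) ≤ ε/4 + ε/4 := by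
    rw [c1]
    calc D T (zIter T (phi T x (zIter T n g) j) x) (zIter T (n + phi T x g k) x)
        ≤ D T (zIter T (phi T x (zIter T n g) j) x) (zIter T n g)
          + D T (zIter T n g) (zIter T (n + phi T x g k) x) := D_triangle T _ _ _
      _ ≤ ε/4 + ε/4 := by
          refine add_le_add (hN₁ j hj) ?_
          rw [c2, D_symm]
          exact hN₂ k (le_max_left _ _)
  have step2 : D T (zIter T n (RtSeq T x h g k)) (zIter T n (Rt T x h g)) ≤ ε/4 := by
    rw [D_iter]
    exact hN₃ k (le_max_right _ _)
  calc dist (RtSeq T x h (zIter T n g) j) (zIter T n (Rt T x h g))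
      ≤ D T _ _ := dist_le_D T _ _
    _ ≤ D T (RtSeq T x h (zIter T n g) j) (zIter T n (RtSeq T x h g k))
        + D T (zIter T n (RtSeq T x h g k)) (zIter T n (Rt T x h g)) := D_triangle T _ _ _
    _ ≤ (ε/4 + ε/4) + ε/4 := add_le_add step1 step2
    _ < ε := by linarith

theorem Rt_orbit (heq : EquicontinuousSystem T) (hX : IsMinimalSystem T) (x h : X) (n : ℤ) :
    Rt T x h (zIter T n x) = zIter T n h := by
  rw [Rt_zIter T heq hX, Rt_x T heq hX]

theorem Rt_isom (heq : EquicontinuousSystem T) (hX : IsMinimalSystem T) (x h a b : X) :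
    D T (Rt T x h a) (Rt T x h b) = D T a b := by
  have key : ∀ j, D T (RtSeq T x h a j) (RtSeq T x h b j)
      ≤ D T a b + D T (zIter T (phi T x a j) x) a + D T (zIter T (phi T x b j) x) b := by
    intro j
    have e1 : D T (RtSeq T x h a j) (RtSeq T x h b j)
        = D T (zIter T (phi T x a j) x) (zIter T (phi T x b j) x) := D_pair T heq hX x h _ _
    rw [e1]
    calc D T (zIter T (phi T x a j) x) (zIter T (phi T x b j) x)
        ≤ D T (zIter T (phi T x a j) x) a + (D T a b + D T b (zIter T (phi T x b j) x)) :=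
          le_trans (D_triangle T _ a _) (by
            exact add_le_add_right (D_triangle T a b _) _)
      _ = D T a b + D T (zIter T (phi T x a j) x) a + D T (zIter T (phi T x b j) x) b := by
          rw [D_symm T b]; ring
  have key2 : ∀ j, D T a b ≤ D T (RtSeq T x h a j) (RtSeq T x h b j)
      + D T (zIter T (phi T x a j) x) a + D T (zIter T (phi T x b j) x) b := by
    intro j
    have e1 : D T (RtSeq T x h a j) (RtSeq T x h b j)
        = D T (zIter T (phi T x a j) x) (zIter T (phi T x b j) x) := D_pair T heq hX x h _ _
    calc D T a b ≤ D T a (zIter T (phi T x a j) x) + (D T (zIter T (phi T x a j) x)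
          (zIter T (phi T x b j) x) + D T (zIter T (phi T x b j) x) b) :=
          le_trans (D_triangle T a _ _) (by exact add_le_add_right (D_triangle T _ _ b) _)
      _ = D T (zIter T (phi T x a j) x) (zIter T (phi T x b j) x)
          + D T (zIter T (phi T x a j) x) a + D T (zIter T (phi T x b j) x) b := by
          rw [D_symm T a, D_symm T _ b]; ring
      _ = _ := by rw [e1]
  apply le_antisymm
  · apply le_of_forall_pos_le_add
    intro ε hε
    have hε4 : 0 < ε/4 := by linarith
    obtain ⟨N₁, hN₁⟩ := phi_Dspec T heq hX x a hε4
    obtain ⟨N₂, hN₂⟩ := phi_Dspec T heq hX x b hε4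
    obtain ⟨N₃, hN₃⟩ := Rt_approx T heq hX x h a hε4
    obtain ⟨N₄, hN₄⟩ := Rt_approx T heq hX x h b hε4
    set j := max (max N₁ N₂) (max N₃ N₄) with hj
    have j1 : N₁ ≤ j := le_trans (le_max_left _ _) (le_max_left _ _)
    have j2 : N₂ ≤ j := le_trans (le_max_right _ _) (le_max_left _ _)
    have j3 : N₃ ≤ j := le_trans (le_max_left _ _) (le_max_right _ _)
    have j4 : N₄ ≤ j := le_trans (le_max_right _ _) (le_max_right _ _)
    have hDa : D T (zIter T (phi T x a j) x) a ≤ ε/4 := hN₁ j j1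
    have hDb : D T (zIter T (phi T x b j) x) b ≤ ε/4 := hN₂ j j2
    calc D T (Rt T x h a) (Rt T x h b)
        ≤ D T (Rt T x h a) (RtSeq T x h a j) + (D T (RtSeq T x h a j) (RtSeq T x h b j)
          + D T (RtSeq T x h b j) (Rt T x h b)) :=
          le_trans (D_triangle T _ _ _) (by exact add_le_add_right (D_triangle T _ _ _) _)
      _ ≤ ε/4 + ((D T a b + ε/4 + ε/4) + ε/4) := by
          refine add_le_add (by rw [D_symm]; exact hN₃ j j3)
            (add_le_add (le_trans (key j) (by linarith [hDa, hDb])) (hN₄ j j4))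
      _ = D T a b + ε := by ring
  · apply le_of_forall_pos_le_add
    intro ε hε
    have hε4 : 0 < ε/4 := by linarith
    obtain ⟨N₁, hN₁⟩ := phi_Dspec T heq hX x a hε4
    obtain ⟨N₂, hN₂⟩ := phi_Dspec T heq hX x b hε4
    obtain ⟨N₃, hN₃⟩ := Rt_approx T heq hX x h a hε4
    obtain ⟨N₄, hN₄⟩ := Rt_approx T heq hX x h b hε4
    set j := max (max N₁ N₂) (max N₃ N₄) with hj
    have j1 : N₁ ≤ j := le_trans (le_max_left _ _) (le_max_left _ _)
    have j2 : N₂ ≤ j := le_trans (le_max_right _ _) (le_max_left _ _)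
    have j3 : N₃ ≤ j := le_trans (le_max_left _ _) (le_max_right _ _)
    have j4 : N₄ ≤ j := le_trans (le_max_right _ _) (le_max_right _ _)
    have h1 : D T (RtSeq T x h a j) (RtSeq T x h b j)
        ≤ D T (Rt T x h a) (Rt T x h b) + ε/4 + ε/4 := by
      calc D T (RtSeq T x h a j) (RtSeq T x h b j)
          ≤ D T (RtSeq T x h a j) (Rt T x h a) + (D T (Rt T x h a) (Rt T x h b)
            + D T (Rt T x h b) (RtSeq T x h b j)) :=
            le_trans (D_triangle T _ _ _) (by exact add_le_add_right (D_triangle T _ _ _) _)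
        _ ≤ ε/4 + (D T (Rt T x h a) (Rt T x h b) + ε/4) :=
            add_le_add (hN₃ j j3) (add_le_add_right (by rw [D_symm]; exact hN₄ j j4) _)
        _ = D T (Rt T x h a) (Rt T x h b) + ε/4 + ε/4 := by ring
    calc D T a b ≤ D T (RtSeq T x h a j) (RtSeq T x h b j)
          + D T (zIter T (phi T x a j) x) a + D T (zIter T (phi T x b j) x) b := key2 j
      _ ≤ (D T (Rt T x h a) (Rt T x h b) + ε/4 + ε/4) + ε/4 + ε/4 :=
          add_le_add (add_le_add h1 (hN₁ j j1)) (hN₂ j j2)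
      _ = D T (Rt T x h a) (Rt T x h b) + ε := by ring

theorem Rt_continuous (heq : EquicontinuousSystem T) (hX : IsMinimalSystem T) (x h : X) :
    Continuous (fun g => Rt T x h g) := by
  rw [Metric.continuous_iff]
  intro b ε hε
  obtain ⟨δ, hδ, hs⟩ := D_small T heq (half_pos hε)
  refine ⟨δ, hδ, fun a ha => ?_⟩
  calc dist (Rt T x h a) (Rt T x h b) ≤ D T (Rt T x h a) (Rt T x h b) := dist_le_D T _ _
    _ = D T a b := Rt_isom T heq hX x h a b
    _ ≤ ε/2 := hs a b ha
    _ < ε := by linarith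


noncomputable def InvSeq (x g : X) (j : ℕ) : X := zIter T (-(phi T x g j)) x

/-- `D (T^{-n} x) (T^{-m} x) = D (T^m x) (T^n x)`. -/
theorem D_neg_pair (x : X) (n m : ℤ) :
    D T (zIter T (-n) x) (zIter T (-m) x) = D T (zIter T m x) (zIter T n x) := by
  have e1 : D T (zIter T (-n) x) (zIter T (-m) x)
      = D T x (zIter T (n + -m) x) := by
    rw [← D_iter T _ _ n, ← zIter_add, ← zIter_add, add_neg_cancel, zIter_zero]
  have e2 : D T (zIter T m x) (zIter T n x) = D T x (zIter T (n + -m) x) := by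
    have : zIter T n x = zIter T m (zIter T (n + -m) x) := by
      rw [← zIter_add]; congr 1; ring
    rw [this, ← D_iter T x (zIter T (n + -m) x) m]
  rw [e1, e2]

theorem InvSeq_D_cauchy (heq : EquicontinuousSystem T) (hX : IsMinimalSystem T) (x g : X)
    {ε : ℝ} (hε : 0 < ε) : ∃ N, ∀ j ≥ N, ∀ k ≥ N,
      D T (InvSeq T x g j) (InvSeq T x g k) ≤ ε := by
  obtain ⟨N, hN⟩ := phi_Dspec T heq hX x g (half_pos hε)
  refine ⟨N, fun j hj k hk => ?_⟩
  rw [InvSeq, InvSeq, D_neg_pair]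
  calc D T (zIter T (phi T x g k) x) (zIter T (phi T x g j) x)
      ≤ D T (zIter T (phi T x g k) x) g + D T g (zIter T (phi T x g j) x) := D_triangle T _ _ _
    _ ≤ ε/2 + ε/2 := add_le_add (hN k hk) (by rw [D_symm]; exact hN j hj)
    _ = ε := by ring

theorem InvSeq_cauchy (heq : EquicontinuousSystem T) (hX : IsMinimalSystem T) (x g : X) :
    CauchySeq (InvSeq T x g) := by
  rw [Metric.cauchySeq_iff]
  intro ε hε
  obtain ⟨N, hN⟩ := InvSeq_D_cauchy T heq hX x g (half_pos hε)
  refine ⟨N, fun j hj k hk => ?_⟩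
  calc dist (InvSeq T x g j) (InvSeq T x g k) ≤ D T _ _ := dist_le_D T _ _
    _ ≤ ε/2 := hN j hj k hk
    _ < ε := by linarith

open Classical in
noncomputable def Inv (x g : X) : X :=
  if H : ∃ L, Tendsto (InvSeq T x g) atTop (𝓝 L) then H.choose else g

theorem Inv_tendsto (heq : EquicontinuousSystem T) (hX : IsMinimalSystem T) (x g : X) :
    Tendsto (InvSeq T x g) atTop (𝓝 (Inv T x g)) := by
  have H : ∃ L, Tendsto (InvSeq T x g) atTop (𝓝 L) :=
    cauchySeq_tendsto_of_complete (InvSeq_cauchy T heq hX x g)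
  rw [Inv, dif_pos H]
  exact H.choose_spec

theorem Inv_approx (heq : EquicontinuousSystem T) (hX : IsMinimalSystem T) (x g : X)
    {ε : ℝ} (hε : 0 < ε) : ∃ N, ∀ j ≥ N, D T (InvSeq T x g j) (Inv T x g) ≤ ε := by
  obtain ⟨N, hN⟩ := InvSeq_D_cauchy T heq hX x g hε
  refine ⟨N, fun j hj => ?_⟩
  apply D_le_of_tendsto T (fun k => InvSeq T x g (k + N))
  · exact (Inv_tendsto T heq hX x g).comp (tendsto_add_atTop_nat N)
  · exact fun k => hN j hj (k + N) (Nat.le_add_left N k)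

/-- `a · a⁻¹ = e`. -/
theorem Rt_inv_self (heq : EquicontinuousSystem T) (hX : IsMinimalSystem T) (x a : X) :
    Rt T x (Inv T x a) a = x := by
  apply Rt_eq_of_tendsto T heq hX
  rw [Metric.tendsto_atTop]
  intro ε hε
  have hε4 : 0 < ε/4 := by linarith
  obtain ⟨N₁, hN₁⟩ := Inv_approx T heq hX x a hε4
  obtain ⟨N₂, hN₂⟩ := phi_Dspec T heq hX x a hε4
  set k := max N₁ N₂ with hk
  refine ⟨N₂, fun j hj => ?_⟩
  have step1 : D T (RtSeq T x (Inv T x a) a j) (zIter T (phi T x a j) (InvSeq T x a k))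
      ≤ ε/4 := by
    rw [RtSeq, D_iter, D_symm]
    exact hN₁ k (le_max_left _ _)
  have step2 : D T (zIter T (phi T x a j) (InvSeq T x a k)) x ≤ ε/4 + ε/4 := by
    have e : zIter T (phi T x a j) (InvSeq T x a k)
        = zIter T (phi T x a j + -(phi T x a k)) x := by
      rw [InvSeq, ← zIter_add]
    rw [e]
    have e2 : D T (zIter T (phi T x a j + -(phi T x a k)) x) x
        = D T (zIter T (phi T x a j) x) (zIter T (phi T x a k) x) := by
      have := D_iter T (zIter T (phi T x a j + -(phi T x a k)) x) x (phi T x a k)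
      rw [← this, ← zIter_add]
      congr 2
      ring
    rw [e2]
    calc D T (zIter T (phi T x a j) x) (zIter T (phi T x a k) x)
        ≤ D T (zIter T (phi T x a j) x) a + D T a (zIter T (phi T x a k) x) := D_triangle T _ _ _
      _ ≤ ε/4 + ε/4 := add_le_add (hN₂ j hj) (by rw [D_symm]; exact hN₂ k (le_max_right _ _))
  calc dist (RtSeq T x (Inv T x a) a j) x ≤ D T _ _ := dist_le_D T _ _
    _ ≤ D T (RtSeq T x (Inv T x a) a j) (zIter T (phi T x a j) (InvSeq T x a k))
        + D T (zIter T (phi T x a j) (InvSeq T x a k)) x := D_triangle T _ _ _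
    _ ≤ ε/4 + (ε/4 + ε/4) := add_le_add step1 step2
    _ < ε := by linarith

/-- `D (T^n x) (g⁻¹) = D (T^n g) x`. -/
theorem D_inv_eq (heq : EquicontinuousSystem T) (hX : IsMinimalSystem T) (x g : X) (n : ℤ) :
    D T (zIter T n x) (Inv T x g) = D T (zIter T n g) x := by
  have key : ∀ k, D T (zIter T n x) (InvSeq T x g k) ≤ D T (zIter T n g) x
      + D T (zIter T (phi T x g k) x) g ∧ D T (zIter T n g) x
      ≤ D T (zIter T n x) (InvSeq T x g k) + D T (zIter T (phi T x g k) x) g := by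
    intro k
    have e1 : D T (zIter T n x) (InvSeq T x g k)
        = D T (zIter T (n + phi T x g k) x) x := by
      rw [InvSeq, ← D_iter T _ _ (phi T x g k), ← zIter_add, ← zIter_add, add_comm (phi T x g k) n,
        add_neg_cancel, zIter_zero]
    have e3 : D T (zIter T (n + phi T x g k) x) (zIter T n g)
        = D T (zIter T (phi T x g k) x) g := by
      rw [zIter_add, D_iter]
    constructor
    · rw [e1]
      calc D T (zIter T (n + phi T x g k) x) x
          ≤ D T (zIter T (n + phi T x g k) x) (zIter T n g) + D T (zIter T n g) x :=
            D_triangle T _ _ _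
        _ = D T (zIter T n g) x + D T (zIter T (phi T x g k) x) g := by rw [e3]; ring
    · calc D T (zIter T n g) x
          ≤ D T (zIter T n g) (zIter T (n + phi T x g k) x)
            + D T (zIter T (n + phi T x g k) x) x := D_triangle T _ _ _
        _ = D T (zIter T n x) (InvSeq T x g k) + D T (zIter T (phi T x g k) x) g := by
            rw [e1, D_symm T (zIter T n g), e3]; ring
  apply le_antisymm
  · apply le_of_forall_pos_le_add
    intro ε hε
    have hε2 : 0 < ε/2 := by linarith
    obtain ⟨N₁, hN₁⟩ := Inv_approx T heq hX x g hε2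
    obtain ⟨N₂, hN₂⟩ := phi_Dspec T heq hX x g hε2
    set k := max N₁ N₂ with hk
    calc D T (zIter T n x) (Inv T x g)
        ≤ D T (zIter T n x) (InvSeq T x g k) + D T (InvSeq T x g k) (Inv T x g) :=
          D_triangle T _ _ _
      _ ≤ (D T (zIter T n g) x + ε/2) + ε/2 :=
          add_le_add (le_trans (key k).1 (add_le_add_right (hN₂ k (le_max_right _ _)) _))
            (hN₁ k (le_max_left _ _))
      _ = D T (zIter T n g) x + ε := by ring
  · apply le_of_forall_pos_le_add
    intro ε hε
    have hε2 : 0 < ε/2 := by linarith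
    obtain ⟨N₁, hN₁⟩ := Inv_approx T heq hX x g hε2
    obtain ⟨N₂, hN₂⟩ := phi_Dspec T heq hX x g hε2
    set k := max N₁ N₂ with hk
    calc D T (zIter T n g) x
        ≤ D T (zIter T n x) (InvSeq T x g k) + D T (zIter T (phi T x g k) x) g := (key k).2
      _ ≤ (D T (zIter T n x) (Inv T x g) + D T (Inv T x g) (InvSeq T x g k)) + ε/2 :=
          add_le_add (D_triangle T _ _ _) (hN₂ k (le_max_right _ _))
      _ ≤ (D T (zIter T n x) (Inv T x g) + ε/2) + ε/2 := by
          have := hN₁ k (le_max_left _ _)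
          rw [D_symm T (Inv T x g)]
          linarith [this]
      _ = D T (zIter T n x) (Inv T x g) + ε := by ring

theorem Rt_assoc (heq : EquicontinuousSystem T) (hX : IsMinimalSystem T) (x c w : X) :
    ∀ g : X, Rt T x (Rt T x c w) g = Rt T x c (Rt T x w g) := by
  have hfun : (fun g => Rt T x (Rt T x c w) g) = (fun g => Rt T x c (Rt T x w g)) := by
    apply Continuous.ext_on (hX x) (Rt_continuous T heq hX x _)
      ((Rt_continuous T heq hX x c).comp (Rt_continuous T heq hX x w))
    rintro g ⟨n, rfl⟩
    show Rt T x (Rt T x c w) (zIter T n x) = Rt T x c (Rt T x w (zIter T n x))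
    rw [Rt_orbit T heq hX, Rt_orbit T heq hX, Rt_zIter T heq hX]
  exact fun g => congrFun hfun g

/-- `a · (a⁻¹ b) = b`. -/
theorem Rt_transfer (heq : EquicontinuousSystem T) (hX : IsMinimalSystem T) (x a b : X) :
    Rt T x (Rt T x b (Inv T x a)) a = b := by
  rw [Rt_assoc T heq hX, Rt_inv_self T heq hX, Rt_x T heq hX]


section Main
variable {X Y : Type*} [MetricSpace X] [CompactSpace X] [MetricSpace Y] [CompactSpace Y]
variable (T : X ≃ₜ X) (S : Y ≃ₜ Y)

theorem zIter_succ {Z : Type*} [TopologicalSpace Z] (R : Z ≃ₜ Z) (n : ℤ) (a : Z) :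
    zIter R (n+1) a = R (zIter R n a) := by
  rw [add_comm, zIter_add, zIter_one]

theorem zIter_pred {Z : Type*} [TopologicalSpace Z] (R : Z ≃ₜ Z) (n : ℤ) (a : Z) :
    zIter R (n-1) a = zIter R n (R.symm a) := by
  have : (n - 1 : ℤ) = n + -1 := by ring
  rw [this, zIter_add]
  rfl

theorem zIter_prod (n : ℤ) (p : X × Y) :
    zIter (T.prodCongr S) n p = (zIter T n p.1, zIter S n p.2) := by
  induction n using Int.induction_on generalizing p with
  | zero => simp [zIter_zero]
  | succ k ih =>
      rw [zIter_succ, ih, zIter_succ, zIter_succ]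
      rfl
  | pred k ih =>
      have e : (-(k:ℤ) - 1) = (-(k:ℤ)) - 1 := rfl
      rw [e, zIter_pred, zIter_pred T, zIter_pred S]
      have h2 : (T.prodCongr S).symm p = (T.symm p.1, S.symm p.2) := rfl
      rw [h2, ih]

/-- The orbit closure of `(x, y)`. -/
noncomputable def Wset (x : X) (y : Y) : Set (X × Y) :=
  closure (zOrbit (T.prodCongr S) (x, y))

theorem Wset_closed (x : X) (y : Y) : IsClosed (Wset T S x y) := isClosed_closure

theorem Wset_compact (x : X) (y : Y) : IsCompact (Wset T S x y) :=
  (Wset_closed T S x y).isCompact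

theorem orbit_mem_Wset (x : X) (y : Y) (n : ℤ) :
    (zIter T n x, zIter S n y) ∈ Wset T S x y := by
  apply subset_closure
  exact ⟨n, (zIter_prod T S n (x,y)).symm ▸ rfl⟩

theorem base_mem_Wset (x : X) (y : Y) : (x, y) ∈ Wset T S x y := by
  have := orbit_mem_Wset T S x y 0
  rwa [zIter_zero, zIter_zero] at this

theorem Wset_iter {x : X} {y : Y} {p : X × Y} (hp : p ∈ Wset T S x y) (n : ℤ) :
    (zIter T n p.1, zIter S n p.2) ∈ Wset T S x y := by
  rw [← zIter_prod]
  refine map_mem_closure (continuous_zIter _ n) hp ?_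
  rintro q ⟨m, rfl⟩
  exact ⟨n + m, zIter_add (T.prodCongr S) n m (x, y)⟩

theorem Wset_mem_iter {x : X} {y : Y} {a : X} {z : Y} (h : (a, z) ∈ Wset T S x y) (n : ℤ) :
    (zIter T n a, zIter S n z) ∈ Wset T S x y := Wset_iter T S h n

/-- Any orbit closure contained in `W`. -/
theorem Wsub (x : X) (y : Y) {p : X × Y} (hp : p ∈ Wset T S x y) :
    Wset T S p.1 p.2 ⊆ Wset T S x y := by
  apply closure_minimal _ (Wset_closed T S x y)
  rintro q ⟨n, rfl⟩
  show zIter (T.prodCongr S) n (p.1, p.2) ∈ Wset T S x y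
  have hpe : ((p.1, p.2) : X × Y) = p := rfl
  rw [hpe, zIter_prod]
  exact Wset_iter T S hp n

/-- Every fiber of an orbit closure is nonempty (minimality of `Y`). -/
theorem fiber_nonempty (hY : IsMinimalSystem S) (g : X) (z₀ : Y) (z : Y) :
    ∃ a, (a, z) ∈ Wset T S g z₀ := by
  have hcpt : IsCompact (Prod.snd '' Wset T S g z₀) :=
    (Wset_compact T S g z₀).image continuous_snd
  have hsub : zOrbit S z₀ ⊆ Prod.snd '' Wset T S g z₀ := by
    rintro q ⟨n, rfl⟩
    exact ⟨(zIter T n g, zIter S n z₀), orbit_mem_Wset T S g z₀ n, rfl⟩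
  have : (univ : Set Y) ⊆ Prod.snd '' Wset T S g z₀ := by
    rw [← (hY z₀).closure_eq]
    exact closure_minimal hsub hcpt.isClosed
  obtain ⟨⟨a, z'⟩, hmem, hz⟩ := this (mem_univ z)
  subst hz
  exact ⟨a, hmem⟩

end Main


section Main2
variable {X Y : Type*} [MetricSpace X] [CompactSpace X] [MetricSpace Y] [CompactSpace Y]
variable (T : X ≃ₜ X) (S : Y ≃ₜ Y)

theorem Phi_image (heq : EquicontinuousSystem T) (hX : IsMinimalSystem T) (x h : X) (y : Y) :
    (fun p : X × Y => (Rt T x h p.1, p.2)) '' Wset T S x y = Wset T S h y := by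
  have hcont : Continuous (fun p : X × Y => (Rt T x h p.1, p.2)) :=
    ((Rt_continuous T heq hX x h).comp continuous_fst).prodMk continuous_snd
  have horb : ∀ n : ℤ, (fun p : X × Y => (Rt T x h p.1, p.2)) (zIter (T.prodCongr S) n (x, y))
      = zIter (T.prodCongr S) n (h, y) := by
    intro n
    rw [zIter_prod, zIter_prod]
    show (Rt T x h (zIter T n x), zIter S n y) = _
    rw [Rt_orbit T heq hX]
  apply le_antisymm
  · calc (fun p : X × Y => (Rt T x h p.1, p.2)) '' Wset T S x y
        ⊆ closure ((fun p : X × Y => (Rt T x h p.1, p.2)) '' zOrbit (T.prodCongr S) (x, y)) :=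
          image_closure_subset_closure_image hcont
      _ ⊆ Wset T S h y := by
          apply closure_mono
          rintro q ⟨w, ⟨n, rfl⟩, rfl⟩
          exact ⟨n, (horb n).symm⟩
  · apply closure_minimal
    · rintro q ⟨n, rfl⟩
      exact ⟨zIter (T.prodCongr S) n (x, y), subset_closure ⟨n, rfl⟩, horb n⟩
    · exact (((Wset_compact T S x y).image hcont).isClosed)

theorem Phi_W_eq (heq : EquicontinuousSystem T) (hX : IsMinimalSystem T) (x : X) (y : Y)
    {h : X} (hΓ : (h, y) ∈ Wset T S x y) :
    (fun p : X × Y => (Rt T x h p.1, p.2)) '' Wset T S x y = Wset T S x y := by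
  have h1 := Phi_image T S heq hX x h y
  have h2 : Wset T S h y ⊆ Wset T S x y := Wsub T S x y (p := (h, y)) hΓ
  have hsub : (fun p : X × Y => (Rt T x h p.1, p.2)) '' Wset T S x y ⊆ Wset T S x y :=
    h1 ▸ h2
  apply le_antisymm hsub
  -- surjectivity: isometric self-embedding of a compact set
  intro p hp
  set Φ : X × Y → X × Y := fun p => (Rt T x h p.1, p.2) with hΦ
  have hcont : Continuous Φ :=
    ((Rt_continuous T heq hX x h).comp continuous_fst).prodMk continuous_snd
  have hclim : IsClosed (Φ '' Wset T S x y) := ((Wset_compact T S x y).image hcont).isClosed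
  set q : ℕ → X × Y := fun k => Φ^[k] p with hq
  have hqW : ∀ k, q k ∈ Wset T S x y := by
    intro k
    induction k with
    | zero => exact hp
    | succ m ih =>
        have : q (m+1) = Φ (q m) := Function.iterate_succ_apply' Φ m p
        rw [this]
        exact hsub ⟨q m, ih, rfl⟩
  have key : ∀ (k : ℕ) (p₁ p₂ : X × Y),
      D T (Φ^[k] p₁).1 (Φ^[k] p₂).1 = D T p₁.1 p₂.1 ∧ (Φ^[k] p₁).2 = p₁.2 := by
    intro k
    induction k with
    | zero => intro p₁ p₂; simp
    | succ m ih =>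
        intro p₁ p₂
        rw [Function.iterate_succ_apply' Φ m p₁, Function.iterate_succ_apply' Φ m p₂]
        constructor
        · show D T (Rt T x h (Φ^[m] p₁).1) (Rt T x h (Φ^[m] p₂).1) = _
          rw [Rt_isom T heq hX]
          exact (ih p₁ p₂).1
        · show (Φ^[m] p₁).2 = p₁.2
          exact (ih p₁ p₂).2
  rw [← hclim.closure_eq]
  rw [Metric.mem_closure_iff]
  intro ε hε
  obtain ⟨δ, hδ, hsmall⟩ := D_small T heq (by linarith : (0:ℝ) < ε/2)
  set δ' := min δ (ε/2) with hδ'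
  have hδ'pos : 0 < δ' := lt_min hδ (by linarith)
  obtain ⟨L, -, σ, hσ, hconv⟩ := isCompact_univ.tendsto_subseq (fun k => mem_univ (q k))
  rw [Metric.tendsto_atTop] at hconv
  obtain ⟨N, hN⟩ := hconv (δ'/2) (by linarith)
  set k := σ N with hk
  set l := σ (N+1) with hl
  have hkl : k < l := hσ (Nat.lt_succ_self N)
  have hqkl : dist (q k) (q l) < δ' := by
    calc dist (q k) (q l) ≤ dist (q k) L + dist (q l) L := dist_triangle_right _ _ _
      _ < δ'/2 + δ'/2 := add_lt_add (hN N le_rfl) (hN (N+1) (Nat.le_succ N))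
      _ = δ' := by ring
  have hX1 : dist (q k).1 (q l).1 < δ' := lt_of_le_of_lt (by rw [Prod.dist_eq]; exact le_max_left _ _) hqkl
  have hY1 : dist (q k).2 (q l).2 < δ' := lt_of_le_of_lt (by rw [Prod.dist_eq]; exact le_max_right _ _) hqkl
  have hDX : D T (q k).1 (q l).1 ≤ ε/2 := hsmall _ _ (lt_of_lt_of_le hX1 (min_le_left _ _))
  -- transfer back using the isometry
  set m := l - k with hm
  have hml : l = k + m := by omega
  have e1 : q l = Φ^[k] (q m) := by
    rw [hq]
    show Φ^[l] p = Φ^[k] (Φ^[m] p)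
    rw [← Function.iterate_add_apply, ← hml]
  have e2 : q k = Φ^[k] (q 0) := by
    rw [hq]
    show Φ^[k] p = Φ^[k] (Φ^[0] p)
    rfl
  have hD0 : D T (q 0).1 (q m).1 ≤ ε/2 := by
    have := (key k (q 0) (q m)).1
    rw [← e2, ← e1] at this
    rw [← this]
    exact hDX
  have hY0 : (q m).2 = (q 0).2 := by
    have h1 := (key k (q 0) (q m)).2
    have h2 : (Φ^[k] (q m)).2 = (q m).2 := (key k (q m) (q m)).2
    rw [← e1] at h2
    rw [← e2] at h1
    -- h1 : (q k).2 = (q 0).2, h2 : (q l).2 = (q m).2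
    -- also (q l).2 = (q k).2? no; use key with iterate on p directly
    have h3 : (q l).2 = p.2 := by
      have := (key l p p).2
      exact this
    have h4 : (q k).2 = p.2 := (key k p p).2
    rw [h3] at h2
    have h5 : (q 0).2 = p.2 := rfl
    rw [h5, ← h2]
  have hq0 : q 0 = p := rfl
  refine ⟨q m, ?_, ?_⟩
  · have hm1 : 1 ≤ m := by omega
    have : q m = Φ (q (m-1)) := by
      rw [hq]
      show Φ^[m] p = Φ (Φ^[m-1] p)
      rw [← Function.iterate_succ_apply' Φ (m-1) p]
      congr 1
      omega
    rw [this]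
    exact ⟨q (m-1), hqW (m-1), rfl⟩
  · rw [Prod.dist_eq]
    apply max_lt
    · calc dist p.1 (q m).1 ≤ D T p.1 (q m).1 := dist_le_D T _ _
        _ = D T (q 0).1 (q m).1 := by rw [hq0]
        _ ≤ ε/2 := hD0
        _ < ε := by linarith
    · rw [← hq0, ← hY0]
      simpa using hε

theorem coset_mult (heq : EquicontinuousSystem T) (hX : IsMinimalSystem T) (x : X) (y : Y)
    {h a : X} {z : Y} (hΓ : (h, y) ∈ Wset T S x y) (ha : (a, z) ∈ Wset T S x y) :
    (Rt T x h a, z) ∈ Wset T S x y := by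
  have := Phi_W_eq T S heq hX x y hΓ
  rw [← this]
  exact ⟨(a, z), ha, rfl⟩

theorem return_base (heq : EquicontinuousSystem T) (hX : IsMinimalSystem T)
    (hY : IsMinimalSystem S) (x : X) (y : Y) {g : X} {z : Y} (hp : (g, z) ∈ Wset T S x y) :
    (x, y) ∈ Wset T S g z := by
  obtain ⟨h, hh⟩ := fiber_nonempty T S hY g z y
  have hsub : Wset T S g z ⊆ Wset T S x y := Wsub T S x y (p := (g, z)) hp
  have hΓ : (h, y) ∈ Wset T S x y := hsub hh
  have h1 : Wset T S h y ⊆ Wset T S g z := Wsub T S g z (p := (h, y)) hh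
  have h2 : Wset T S h y = Wset T S x y := by
    rw [← Phi_image T S heq hX x h y, Phi_W_eq T S heq hX x y hΓ]
  apply h1
  rw [h2]
  exact base_mem_Wset T S x y


theorem coset_diff (heq : EquicontinuousSystem T) (hX : IsMinimalSystem T)
    (hY : IsMinimalSystem S) (x : X) (y : Y) {g g' : X} {z : Y}
    (hg : (g, z) ∈ Wset T S x y) (hg' : (g', z) ∈ Wset T S x y) :
    (Rt T x g' (Inv T x g), y) ∈ Wset T S x y := by
  rw [← (Wset_closed T S x y).closure_eq, Metric.mem_closure_iff]
  intro ε hε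
  obtain ⟨δ, hδ, hsmall⟩ := D_small T heq (by linarith : (0:ℝ) < ε/2)
  set δ' := min δ (ε/2) with hδ'
  have hδ'pos : 0 < δ' := lt_min hδ (by linarith)
  have hret : (x, y) ∈ closure (zOrbit (T.prodCongr S) (g, z)) :=
    return_base T S heq hX hY x y hg
  rw [Metric.mem_closure_iff] at hret
  obtain ⟨w, ⟨n, rfl⟩, hb⟩ := hret δ' hδ'pos
  have hb' : dist ((x : X), (y : Y)) (zIter T n g, zIter S n z) < δ' := by
    have hb2 : dist ((x : X), (y : Y)) (zIter (T.prodCongr S) n (g, z)) < δ' := hb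
    have e : zIter (T.prodCongr S) n (g, z) = ((zIter T n g : X), (zIter S n z : Y)) :=
      zIter_prod T S n (g, z)
    rwa [e] at hb2
  have hbX : dist x (zIter T n g) < δ' :=
    lt_of_le_of_lt (by rw [Prod.dist_eq]; exact le_max_left _ _) hb'
  have hbY : dist y (zIter S n z) < δ' :=
    lt_of_le_of_lt (by rw [Prod.dist_eq]; exact le_max_right _ _) hb'
  refine ⟨(zIter T n g', zIter S n z), Wset_mem_iter T S hg' n, ?_⟩
  rw [Prod.dist_eq]
  apply max_lt
  · have e1 : D T (Rt T x g' (Inv T x g)) (zIter T n g') = D T (zIter T n g) x := by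
      rw [← Rt_orbit T heq hX x g' n, Rt_isom T heq hX, D_symm, D_inv_eq T heq hX]
    calc dist (Rt T x g' (Inv T x g)) (zIter T n g') ≤ D T _ _ := dist_le_D T _ _
      _ = D T (zIter T n g) x := e1
      _ ≤ ε/2 := hsmall _ _ (by rw [dist_comm]; exact lt_of_lt_of_le hbX (min_le_left _ _))
      _ < ε := by linarith
  · exact lt_of_lt_of_le hbY (le_trans (min_le_right _ _) (by linarith))

theorem inv_mem (heq : EquicontinuousSystem T) (hX : IsMinimalSystem T)
    (hY : IsMinimalSystem S) (x : X) (y : Y) {a : X} (ha : (a, y) ∈ Wset T S x y) :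
    (Inv T x a, y) ∈ Wset T S x y := by
  have := coset_diff T S heq hX hY x y ha (base_mem_Wset T S x y)
  rwa [Rt_one T heq hX] at this

def Close (x : X) (y : Y) (z z' : Y) (ε : ℝ) : Prop :=
  ∃ a b, (a, z) ∈ Wset T S x y ∧ (b, z') ∈ Wset T S x y ∧ D T a b < ε

theorem close_trans (heq : EquicontinuousSystem T) (hX : IsMinimalSystem T)
    (hY : IsMinimalSystem S) (x : X) (y : Y) {z z' z'' : Y} {ε ε' : ℝ}
    (h1 : Close T S x y z z' ε) (h2 : Close T S x y z' z'' ε') :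
    Close T S x y z z'' (ε + ε') := by
  obtain ⟨a, b, haz, hbz, hab⟩ := h1
  obtain ⟨b', c, hbz', hcz, hbc⟩ := h2
  have hγ : (Rt T x b' (Inv T x b), y) ∈ Wset T S x y := coset_diff T S heq hX hY x y hbz hbz'
  refine ⟨Rt T x (Rt T x b' (Inv T x b)) a, c, coset_mult T S heq hX x y hγ haz, hcz, ?_⟩
  calc D T (Rt T x (Rt T x b' (Inv T x b)) a) c
      ≤ D T (Rt T x (Rt T x b' (Inv T x b)) a) (Rt T x (Rt T x b' (Inv T x b)) b)
        + D T (Rt T x (Rt T x b' (Inv T x b)) b) c := D_triangle T _ _ _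
    _ = D T a b + D T b' c := by rw [Rt_isom T heq hX, Rt_transfer T heq hX]
    _ < ε + ε' := add_lt_add hab hbc

theorem close_shift {x : X} {y : Y} {z z' : Y} {ε : ℝ}
    (h : Close T S x y z z' ε) (n : ℤ) :
    Close T S x y (zIter S n z) (zIter S n z') ε := by
  obtain ⟨a, b, haz, hbz, hab⟩ := h
  exact ⟨zIter T n a, zIter T n b, Wset_mem_iter T S haz n, Wset_mem_iter T S hbz n,
    by rwa [D_iter]⟩

theorem close_unif (heq : EquicontinuousSystem T) (hX : IsMinimalSystem T)
    (hY : IsMinimalSystem S) (x : X) (y : Y) {ε : ℝ} (hε : 0 < ε) :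
    ∃ δ > (0:ℝ), ∀ z z', dist z z' < δ → Close T S x y z z' ε := by
  by_contra hcon
  push_neg at hcon
  have hseq : ∀ i : ℕ, ∃ zz : Y × Y, dist zz.1 zz.2 < 1/(i+1)
      ∧ ¬ Close T S x y zz.1 zz.2 ε := by
    intro i
    obtain ⟨z, z', h1, h2⟩ := hcon (1/(i+1)) (one_div_succ_pos i)
    exact ⟨(z, z'), h1, h2⟩
  choose f hf1 hf2 using hseq
  choose a haW using fun i => fiber_nonempty T S hY x y (f i).1
  choose b hbW using fun i => fiber_nonempty T S hY x y (f i).2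
  obtain ⟨L, -, σ, hσ, hconv⟩ := isCompact_univ.tendsto_subseq
    (fun i => mem_univ ((a i, b i), f i) :
      ∀ i, ((a i, b i), f i) ∈ (univ : Set ((X × X) × (Y × Y))))
  have hta : Tendsto (fun i => a (σ i)) atTop (𝓝 L.1.1) :=
    ((continuous_fst.comp continuous_fst).tendsto L).comp hconv
  have htb : Tendsto (fun i => b (σ i)) atTop (𝓝 L.1.2) :=
    ((continuous_snd.comp continuous_fst).tendsto L).comp hconv
  have htz : Tendsto (fun i => (f (σ i)).1) atTop (𝓝 L.2.1) :=
    ((continuous_fst.comp continuous_snd).tendsto L).comp hconv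
  have htz' : Tendsto (fun i => (f (σ i)).2) atTop (𝓝 L.2.2) :=
    ((continuous_snd.comp continuous_snd).tendsto L).comp hconv
  have hzz : L.2.1 = L.2.2 := by
    have h1 : Tendsto (fun i => dist (f (σ i)).1 (f (σ i)).2) atTop
        (𝓝 (dist L.2.1 L.2.2)) := htz.dist htz'
    have h2 : Tendsto (fun i => dist (f (σ i)).1 (f (σ i)).2) atTop (𝓝 0) := by
      apply squeeze_zero (fun i => dist_nonneg) (g := fun i : ℕ => 1/(i+1))
      · intro i
        refine le_trans (hf1 (σ i)).le ?_
        apply one_div_le_one_div_of_le (by positivity)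
        have : (i:ℝ) ≤ (σ i : ℝ) := by exact_mod_cast hσ.le_apply
        linarith
      · exact tendsto_one_div_add_atTop_nhds_zero_nat
    exact dist_eq_zero.1 (tendsto_nhds_unique h1 h2)
  have hWa : (L.1.1, L.2.1) ∈ Wset T S x y :=
    (Wset_closed T S x y).mem_of_tendsto (hta.prodMk_nhds htz)
      (Eventually.of_forall fun i => haW (σ i))
  have hWb : (L.1.2, L.2.1) ∈ Wset T S x y := by
    rw [hzz]
    exact (Wset_closed T S x y).mem_of_tendsto (htb.prodMk_nhds htz')
      (Eventually.of_forall fun i => hbW (σ i))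
  have hγ : (Rt T x L.1.2 (Inv T x L.1.1), y) ∈ Wset T S x y :=
    coset_diff T S heq hX hY x y hWa hWb
  obtain ⟨δ₀, hδ₀, hsm⟩ := D_small T heq (by linarith : (0:ℝ) < ε/4)
  rw [Metric.tendsto_atTop] at hta htb
  obtain ⟨N₁, hN₁⟩ := hta δ₀ hδ₀
  obtain ⟨N₂, hN₂⟩ := htb δ₀ hδ₀
  set i := max N₁ N₂ with hi
  have hD1 : D T (a (σ i)) L.1.1 ≤ ε/4 := hsm _ _ (hN₁ i (le_max_left _ _))
  have hD2 : D T L.1.2 (b (σ i)) ≤ ε/4 := by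
    rw [D_symm]; exact hsm _ _ (hN₂ i (le_max_right _ _))
  apply hf2 (σ i)
  refine ⟨Rt T x (Rt T x L.1.2 (Inv T x L.1.1)) (a (σ i)), b (σ i),
    coset_mult T S heq hX x y hγ (haW (σ i)), hbW (σ i), ?_⟩
  calc D T (Rt T x (Rt T x L.1.2 (Inv T x L.1.1)) (a (σ i))) (b (σ i))
      ≤ D T (Rt T x (Rt T x L.1.2 (Inv T x L.1.1)) (a (σ i)))
          (Rt T x (Rt T x L.1.2 (Inv T x L.1.1)) L.1.1)
        + D T (Rt T x (Rt T x L.1.2 (Inv T x L.1.1)) L.1.1) (b (σ i)) := D_triangle T _ _ _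
    _ = D T (a (σ i)) L.1.1 + D T L.1.2 (b (σ i)) := by
        rw [Rt_isom T heq hX, Rt_transfer T heq hX]
    _ ≤ ε/4 + ε/4 := add_le_add hD1 hD2
    _ < ε := by linarith

end Main2
end S16

/-- if (X,T) is minimal equicontinuous and (Y,S) minimal, then
{x} × RP[y] is contained in the orbit closure of (x,y). -/

theorem stmt16 {X Y : Type*} [MetricSpace X] [CompactSpace X]
    [MetricSpace Y] [CompactSpace Y] (T : X ≃ₜ X) (S : Y ≃ₜ Y)
    (hX : IsMinimalSystem T) (hY : IsMinimalSystem S)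
    (heq : EquicontinuousSystem T) :
    ∀ (x : X) (y y' : Y), (y, y') ∈ RP S →
      ((x, y') : X × Y) ∈ closure (zOrbit (T.prodCongr S) (x, y)) := by
  intro x y y' hRP
  obtain ⟨u, v, nn, htu, htv, htd⟩ := hRP
  have close_all : ∀ ε : ℝ, 0 < ε → S16.Close T S x y y y' ε := by
    intro ε hε
    have hε3 : 0 < ε/3 := by linarith
    obtain ⟨δ, hδ, hcl⟩ := S16.close_unif T S heq hX hY x y hε3
    rw [Metric.tendsto_atTop] at htu htv htd
    obtain ⟨N₁, h₁⟩ := htu δ hδ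
    obtain ⟨N₂, h₂⟩ := htv δ hδ
    obtain ⟨N₃, h₃⟩ := htd δ hδ
    set i := max N₁ (max N₂ N₃) with hi
    have hi1 : N₁ ≤ i := le_max_left _ _
    have hi2 : N₂ ≤ i := le_trans (le_max_left _ _) (le_max_right _ _)
    have hi3 : N₃ ≤ i := le_trans (le_max_right _ _) (le_max_right _ _)
    have c1 : S16.Close T S x y y (u i) (ε/3) := hcl _ _ (by rw [dist_comm]; exact h₁ i hi1)
    have hd : dist (zIter S (nn i) (u i)) (zIter S (nn i) (v i)) < δ := by
      have h4 := h₃ i hi3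
      rw [Real.dist_eq, sub_zero] at h4
      exact lt_of_le_of_lt (le_abs_self _) h4
    have c2 : S16.Close T S x y (u i) (v i) (ε/3) := by
      have hc := hcl _ _ hd
      have hsh := S16.close_shift T S hc (-(nn i))
      have e1 : zIter S (-(nn i)) (zIter S (nn i) (u i)) = u i := by
        rw [← S16.zIter_add, neg_add_cancel, S16.zIter_zero]
      have e2 : zIter S (-(nn i)) (zIter S (nn i) (v i)) = v i := by
        rw [← S16.zIter_add, neg_add_cancel, S16.zIter_zero]
      rwa [e1, e2] at hsh
    have c3 : S16.Close T S x y (v i) y' (ε/3) := hcl _ _ (h₂ i hi2)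
    have call := S16.close_trans T S heq hX hY x y
      (S16.close_trans T S heq hX hY x y c1 c2) c3
    have e : ε/3 + ε/3 + ε/3 = ε := by ring
    rwa [e] at call
  show (x, y') ∈ S16.Wset T S x y
  rw [← (S16.Wset_closed T S x y).closure_eq, Metric.mem_closure_iff]
  intro ε hε
  obtain ⟨a, b, hay, hby', hab⟩ := close_all ε hε
  have hia : (S16.Inv T x a, y) ∈ S16.Wset T S x y := S16.inv_mem T S heq hX hY x y hay
  have hc : (S16.Rt T x (S16.Inv T x a) b, y') ∈ S16.Wset T S x y :=
    S16.coset_mult T S heq hX x y hia hby'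
  refine ⟨(S16.Rt T x (S16.Inv T x a) b, y'), hc, ?_⟩
  rw [Prod.dist_eq]
  apply max_lt
  · calc dist x (S16.Rt T x (S16.Inv T x a) b)
        ≤ S16.D T x (S16.Rt T x (S16.Inv T x a) b) := S16.dist_le_D T _ _
      _ = S16.D T (S16.Rt T x (S16.Inv T x a) a) (S16.Rt T x (S16.Inv T x a) b) := by
          rw [S16.Rt_inv_self T heq hX]
      _ = S16.D T a b := S16.Rt_isom T heq hX x _ a b
      _ < ε := hab
  · simpa using hε
end

section
/- Let (X,T) and (Y,S) be minimal systems, let Z be their maximal common equicontinuous factor with maps α : X → Z, β : Y → Z, and γ(x,y) = α(x) − β(y). Suppose there exists z₀ ∈ Z such that γ⁻¹(z₀) is a minimal set for T×S. Then the set {z ∈ Z : γ⁻¹(z) is minimal} is a dense Gδ subset of Z. -/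
open Filter Topology Set

section Aux

variable {W : Type*} [TopologicalSpace W] (P : W ≃ₜ W)

lemma zIter_zero' (x : W) : zIter P 0 x = x := rfl

lemma zIter_add_one' (n : ℤ) (x : W) : zIter P (n + 1) x = zIter P n (P x) := by
  simp [zIter, zpow_add_one, Equiv.Perm.mul_apply]

lemma zIter_sub_one' (n : ℤ) (x : W) : zIter P (n - 1) x = zIter P n (P.symm x) := by
  have h : (P.toEquiv : Equiv.Perm W)⁻¹ = P.toEquiv.symm := rfl
  simp [zIter, zpow_sub_one, Equiv.Perm.mul_apply, h]

lemma zIter_comm' (n : ℤ) (x : W) : zIter P n (P x) = P (zIter P n x) := by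
  have h : (P.toEquiv ^ n) * P.toEquiv = P.toEquiv * (P.toEquiv ^ n) :=
    ((Commute.refl P.toEquiv).zpow_left n).eq
  have := congrArg (fun e : Equiv.Perm W => e x) h
  simpa [Equiv.Perm.mul_apply, zIter] using this

lemma zIter_continuous' (n : ℤ) : Continuous (zIter P n) := by
  induction n using Int.induction_on with
  | zero =>
    have : zIter P 0 = id := by funext x; rfl
    simpa [this] using continuous_id
  | succ n ih =>
    have : zIter P (n + 1 : ℤ) = fun x => zIter P (n : ℤ) (P x) := by
      funext x; exact zIter_add_one' P n x
    rw [this]; exact ih.comp P.continuous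
  | pred n ih =>
    have : zIter P (-(n : ℤ) - 1) = fun x => zIter P (-(n : ℤ)) (P.symm x) := by
      funext x; exact zIter_sub_one' P (-n) x
    rw [this]; exact ih.comp P.symm.continuous

lemma symm_mem_of_image_eq {M : Set W} (hM : P '' M = M) {x : W} (hx : x ∈ M) :
    P.symm x ∈ M := by
  rw [← hM] at hx
  obtain ⟨m, hm, rfl⟩ := hx
  simpa using hm

lemma apply_mem_of_image_eq {M : Set W} (hM : P '' M = M) {x : W} (hx : x ∈ M) :
    P x ∈ M := by
  rw [← hM]; exact Set.mem_image_of_mem _ hx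

lemma zIter_mem_of_image_eq {M : Set W} (hM : P '' M = M) (n : ℤ) :
    ∀ x ∈ M, zIter P n x ∈ M := by
  induction n using Int.induction_on with
  | zero => intro x hx; simpa [zIter] using hx
  | succ n ih =>
    intro x hx
    rw [zIter_add_one']
    exact ih _ (apply_mem_of_image_eq P hM hx)
  | pred n ih =>
    intro x hx
    rw [zIter_sub_one']
    exact ih _ (symm_mem_of_image_eq P hM hx)

lemma image_zOrbit (x : W) : P '' zOrbit P x = zOrbit P x := by
  ext w
  constructor
  · rintro ⟨-, ⟨n, rfl⟩, rfl⟩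
    exact ⟨n + 1, by show zIter P (n + 1) x = P (zIter P n x); rw [zIter_add_one', zIter_comm']⟩
  · rintro ⟨n, rfl⟩
    refine ⟨zIter P (n - 1) x, ⟨n - 1, rfl⟩, ?_⟩
    show P (zIter P (n - 1) x) = zIter P n x
    rw [← zIter_comm', ← zIter_add_one', sub_add_cancel]

/-- Characterization of minimal subsets via `ε`-dense orbits. -/
lemma isMinimalSubset_iff {W : Type*} [MetricSpace W] (P : W ≃ₜ W) {M : Set W}
    (hne : M.Nonempty) (hcl : IsClosed M) (hinv : P '' M = M) :
    IsMinimalSubset P M ↔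
      ∀ p ∈ M, ∀ q ∈ M, ∀ ε > (0 : ℝ), ∃ n : ℤ, dist (zIter P n p) q < ε := by
  constructor
  · rintro ⟨-, -, -, hsub⟩ p hp q hq ε hε
    have horb : zOrbit P p ⊆ M := by
      rintro - ⟨n, rfl⟩; exact zIter_mem_of_image_eq P hinv n p hp
    have hM' : closure (zOrbit P p) = M := by
      refine hsub _ (closure_minimal horb hcl) ⟨p, subset_closure ⟨0, rfl⟩⟩
        isClosed_closure ?_
      rw [P.image_closure, image_zOrbit]
    have hqcl : q ∈ closure (zOrbit P p) := hM' ▸ hq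
    rcases Metric.mem_closure_iff.mp hqcl ε hε with ⟨-, ⟨n, rfl⟩, hd⟩
    exact ⟨n, by rwa [dist_comm]⟩
  · intro h
    refine ⟨hne, hcl, hinv, ?_⟩
    intro M' hM'sub hM'ne hM'cl hM'inv
    obtain ⟨p, hp⟩ := hM'ne
    refine Set.Subset.antisymm hM'sub ?_
    intro q hq
    have horb : zOrbit P p ⊆ M' := by
      rintro - ⟨n, rfl⟩; exact zIter_mem_of_image_eq P hM'inv n p hp
    have : q ∈ closure (zOrbit P p) := by
      rw [Metric.mem_closure_iff]
      intro ε hε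
      obtain ⟨n, hn⟩ := h p (hM'sub hp) q hq ε hε
      exact ⟨zIter P n p, ⟨n, rfl⟩, by rwa [dist_comm]⟩
    exact hM'cl.closure_subset (closure_mono horb this)

/-- Minimality is preserved by a commuting homeomorphism. -/
lemma isMinimalSubset_image (φ : W ≃ₜ W)
    (hcomm : ∀ x, φ (P x) = P (φ x)) {M : Set W} (h : IsMinimalSubset P M) :
    IsMinimalSubset P (φ '' M) := by
  obtain ⟨hne, hcl, hinv, hsub⟩ := h
  have himg : ∀ N : Set W, P '' (φ '' N) = φ '' (P '' N) := by
    intro N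
    rw [Set.image_image, Set.image_image]
    exact Set.image_congr fun x _ => (hcomm x).symm
  refine ⟨hne.image φ, φ.isClosedMap M hcl, by rw [himg, hinv], ?_⟩
  intro M' hM'sub hM'ne hM'cl hM'inv
  have hcomm' : ∀ x, φ.symm (P x) = P (φ.symm x) := by
    intro x
    have := hcomm (φ.symm x)
    simp only [φ.apply_symm_apply] at this
    rw [← this]; simp
  have himg' : ∀ N : Set W, P '' (φ.symm '' N) = φ.symm '' (P '' N) := by
    intro N
    rw [Set.image_image, Set.image_image]
    exact Set.image_congr fun x _ => (hcomm' x).symm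
  have hNsub : φ.symm '' M' ⊆ M := by
    intro x hx
    obtain ⟨m', hm', rfl⟩ := hx
    obtain ⟨m, hm, rfl⟩ := hM'sub hm'
    simpa using hm
  have hN : φ.symm '' M' = M :=
    hsub _ hNsub (hM'ne.image _) (φ.symm.isClosedMap M' hM'cl)
      (by rw [himg', hM'inv])
  calc M' = φ '' (φ.symm '' M') := by
        rw [Set.image_image]; simp
    _ = φ '' M := by rw [hN]

/-- The iterate of a homeomorphism as a homeomorphism. -/
def zHomeo {W : Type*} [TopologicalSpace W] (P : W ≃ₜ W) (n : ℤ) : W ≃ₜ W where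
  toEquiv := P.toEquiv ^ n
  continuous_toFun := zIter_continuous' P n
  continuous_invFun := by
    show Continuous ⇑(P.toEquiv ^ n).symm
    have h : ⇑(P.toEquiv ^ n).symm = zIter P (-n) := by
      funext x
      show (P.toEquiv ^ n)⁻¹ x = (P.toEquiv ^ (-n)) x
      rw [zpow_neg]
    rw [h]; exact zIter_continuous' P (-n)

lemma zHomeo_apply (n : ℤ) (x : W) : zHomeo P n x = zIter P n x := rfl

end Aux

/-- if some fiber of γ(x,y) = α(x) − β(y) is a minimal set,
then the set of z with minimal fiber is a dense Gδ subset of Z. -/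
theorem stmt18 {X Y Z : Type*} [MetricSpace X] [CompactSpace X]
    [MetricSpace Y] [CompactSpace Y]
    [MetricSpace Z] [CompactSpace Z] [AddCommGroup Z] [IsTopologicalAddGroup Z]
    (T : X ≃ₜ X) (S : Y ≃ₜ Y)
    (hX : IsMinimalSystem T) (hY : IsMinimalSystem S)
    (θ : Z) (hθ : Dense (Set.range fun n : ℤ => n • θ))
    (α : X → Z) (hαc : Continuous α) (hαs : Function.Surjective α)
    (hα : ∀ x, α (T x) = α x + θ)
    (β : Y → Z) (hβc : Continuous β) (hβs : Function.Surjective β)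
    (hβ : ∀ y, β (S y) = β y + θ)
    (z₀ : Z)
    (hmin : IsMinimalSubset (T.prodCongr S)
      ((fun p : X × Y => α p.1 - β p.2) ⁻¹' {z₀})) :
    IsGδ {z : Z | IsMinimalSubset (T.prodCongr S)
        ((fun p : X × Y => α p.1 - β p.2) ⁻¹' {z})} ∧
      Dense {z : Z | IsMinimalSubset (T.prodCongr S)
        ((fun p : X × Y => α p.1 - β p.2) ⁻¹' {z})} := by
  classical
  set γ : X × Y → Z := fun p : X × Y => α p.1 - β p.2 with hγdef
  set P : (X × Y) ≃ₜ (X × Y) := T.prodCongr S with hPdef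
  have hγc : Continuous γ := (hαc.comp continuous_fst).sub (hβc.comp continuous_snd)
  have hPapply : ∀ p : X × Y, P p = (T p.1, S p.2) := fun p => rfl
  have hγP : ∀ p, γ (P p) = γ p := by
    intro p
    simp only [hγdef, hPapply, hα, hβ]
    abel
  have hαn : ∀ (n : ℤ) (x : X), α (zIter T n x) = α x + n • θ := by
    intro n
    induction n using Int.induction_on with
    | zero => intro x; simp [zIter]
    | succ n ih =>
      intro x
      rw [zIter_add_one', ih, hα, add_smul, one_smul]
      abel
    | pred n ih =>
      intro x
      have hsymm : α (T.symm x) = α x - θ := by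
        rw [eq_sub_iff_add_eq, ← hα, Homeomorph.apply_symm_apply]
      rw [zIter_sub_one', ih, hsymm, sub_smul, one_smul]
      abel
  have hfibinv : ∀ z : Z, P '' (γ ⁻¹' {z}) = γ ⁻¹' {z} := by
    intro z
    ext w
    constructor
    · rintro ⟨p, hp, rfl⟩
      show γ (P p) ∈ ({z} : Set Z)
      rw [hγP]; exact hp
    · intro hw
      refine ⟨P.symm w, ?_, P.apply_symm_apply w⟩
      have h1 := hγP (P.symm w)
      rw [P.apply_symm_apply] at h1
      show γ (P.symm w) ∈ ({z} : Set Z)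
      rw [← h1]; exact hw
  have hfibne : ∀ z : Z, (γ ⁻¹' {z}).Nonempty := by
    intro z
    obtain ⟨y₀, -⟩ := hβs z
    obtain ⟨x₀, hx₀⟩ := hαs (z + β y₀)
    exact ⟨(x₀, y₀), by simp [hγdef, hx₀]⟩
  have hfibcl : ∀ z : Z, IsClosed (γ ⁻¹' {z}) := fun z =>
    isClosed_singleton.preimage hγc
  constructor
  · -- Gδ
    set K : ℕ → Set ((X × Y) × (X × Y)) := fun m =>
      {pq | γ pq.1 = γ pq.2 ∧
        ∀ n : ℤ, 1 / ((m : ℝ) + 1) ≤ dist (zIter P n pq.1) pq.2} with hKdef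
    set C : ℕ → Set Z := fun m =>
      (fun pq : (X × Y) × (X × Y) => γ pq.1) '' K m with hCdef
    have hKcl : ∀ m, IsClosed (K m) := by
      intro m
      have heq : K m = {pq : (X × Y) × (X × Y) | γ pq.1 = γ pq.2} ∩
          ⋂ n : ℤ, {pq : (X × Y) × (X × Y) |
            1 / ((m : ℝ) + 1) ≤ dist (zIter P n pq.1) pq.2} := by
        ext pq
        simp [hKdef, Set.mem_iInter]
      rw [heq]
      exact (isClosed_eq (hγc.comp continuous_fst) (hγc.comp continuous_snd)).inter
        (isClosed_iInter fun n => isClosed_le continuous_const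
          (((zIter_continuous' P n).comp continuous_fst).dist continuous_snd))
    have hCcl : ∀ m, IsClosed (C m) := fun m =>
      ((hKcl m).isCompact.image (hγc.comp continuous_fst)).isClosed
    have hDeq : {z : Z | IsMinimalSubset P (γ ⁻¹' {z})} = ⋂ m : ℕ, (C m)ᶜ := by
      ext z
      simp only [Set.mem_setOf_eq, Set.mem_iInter, Set.mem_compl_iff]
      rw [isMinimalSubset_iff P (hfibne z) (hfibcl z) (hfibinv z)]
      constructor
      · intro h m hm
        obtain ⟨pq, ⟨heq, hd⟩, hz⟩ := hm
        have hp : pq.1 ∈ γ ⁻¹' {z} := hz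
        have hq : pq.2 ∈ γ ⁻¹' {z} := by
          show γ pq.2 ∈ ({z} : Set Z); rw [← heq]; exact hz
        obtain ⟨n, hn⟩ := h pq.1 hp pq.2 hq (1 / ((m : ℝ) + 1)) (by positivity)
        exact absurd (hd n) (not_le.mpr hn)
      · intro h p hp q hq ε hε
        obtain ⟨m, hm⟩ := exists_nat_one_div_lt hε
        by_contra hcon
        push_neg at hcon
        refine h m ⟨(p, q), ⟨?_, fun n => hm.le.trans (hcon n)⟩, hp⟩
        have hp' : γ p = z := hp
        have hq' : γ q = z := hq
        rw [hp', hq']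
    rw [hDeq]
    exact IsGδ.iInter fun m => ((hCcl m).isOpen_compl).isGδ
  · -- Density
    have hmem : ∀ n : ℤ, z₀ + n • θ ∈
        {z : Z | IsMinimalSubset P (γ ⁻¹' {z})} := by
      intro n
      set φ : (X × Y) ≃ₜ (X × Y) := (zHomeo T n).prodCongr (Homeomorph.refl Y)
        with hφdef
      have hφapply : ∀ p : X × Y, φ p = (zIter T n p.1, p.2) := fun p => rfl
      have hcomm : ∀ p, φ (P p) = P (φ p) := by
        intro p
        show (zIter T n (T p.1), S p.2) = (T (zIter T n p.1), S p.2)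
        rw [zIter_comm']
      have hshift : ∀ q : X × Y, γ (φ q) = γ q + n • θ := by
        intro q
        show α (zIter T n q.1) - β q.2 = α q.1 - β q.2 + n • θ
        rw [hαn]; abel
      have himage : φ '' (γ ⁻¹' {z₀}) = γ ⁻¹' {z₀ + n • θ} := by
        ext w
        constructor
        · rintro ⟨p, hp, rfl⟩
          show γ (φ p) ∈ ({z₀ + n • θ} : Set Z)
          have hp' : γ p = z₀ := hp
          rw [Set.mem_singleton_iff, hshift, hp']
        · intro hw
          have hw' : γ w = z₀ + n • θ := hw
          refine ⟨φ.symm w, ?_, φ.apply_symm_apply w⟩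
          have h1 := hshift (φ.symm w)
          rw [φ.apply_symm_apply, hw'] at h1
          show γ (φ.symm w) ∈ ({z₀} : Set Z)
          rw [Set.mem_singleton_iff]
          exact (add_right_cancel h1.symm)
      have hres := isMinimalSubset_image P φ hcomm hmin
      rw [himage] at hres
      exact hres
    have hsub : Set.range (fun n : ℤ => z₀ + n • θ) ⊆
        {z : Z | IsMinimalSubset P (γ ⁻¹' {z})} := by
      rintro - ⟨n, rfl⟩; exact hmem n
    have hrange : Set.range (fun n : ℤ => z₀ + n • θ) =
        (Homeomorph.addLeft z₀) '' Set.range (fun n : ℤ => n • θ) := by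
      rw [← Set.range_comp]; rfl
    have hdense : Dense (Set.range fun n : ℤ => z₀ + n • θ) := by
      rw [dense_iff_closure_eq, hrange, ← Homeomorph.image_closure,
        hθ.closure_eq, Set.image_univ]
      exact Homeomorph.range_coe _
    exact hdense.mono hsub
end

section
/- Let (X,T) = lim← (Xₙ, T) be an inverse limit of minimal systems and (Y,S) a minimal system. If Xₙ is quasi-disjoint from Y for every n, then X is quasi-disjoint from Y. -/
open Filter Topology Set

lemma zIter_factor {X Z : Type*} [TopologicalSpace X] [TopologicalSpace Z]
    (T : X ≃ₜ X) (R : Z ≃ₜ Z) (f : X → Z) (hf : ∀ x, f (T x) = R (f x)) :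
    ∀ (n : ℤ) (x : X), f (zIter T n x) = zIter R n (f x) := by
  have hsymm : ∀ x, f (T.symm x) = R.symm (f x) := by
    intro x
    have := hf (T.symm x)
    rw [T.apply_symm_apply] at this
    rw [this, R.symm_apply_apply]
  intro n
  induction n using Int.induction_on with
  | zero => intro x; simp [zIter]
  | succ k ih =>
    intro x
    have h1 : zIter T (k + 1) x = zIter T k (T x) := by
      simp [zIter, zpow_add_one]
    have h2 : zIter R (k + 1) (f x) = zIter R k (R (f x)) := by
      simp [zIter, zpow_add_one]
    rw [h1, h2, ih (T x), hf]
  | pred k ih =>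
    intro x
    have h1 : zIter T (-k - 1) x = zIter T (-k) (T.symm x) := by
      simp [zIter, zpow_sub_one]
    have h2 : zIter R (-k - 1) (f x) = zIter R (-k) (R.symm (f x)) := by
      simp [zIter, zpow_sub_one]
    rw [h1, h2, ih (T.symm x), hsymm]

lemma rp_factor {X Z : Type*} [MetricSpace X] [MetricSpace Z] [CompactSpace X]
    (T : X ≃ₜ X) (R : Z ≃ₜ Z) (f : X → Z) (hfc : Continuous f)
    (hf : ∀ x, f (T x) = R (f x)) {a b : X} (h : (a, b) ∈ RP T) :
    (f a, f b) ∈ RP R := by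
  obtain ⟨u, v, n, hu, hv, hd⟩ := h
  refine ⟨f ∘ u, f ∘ v, n, (hfc.tendsto a).comp hu, (hfc.tendsto b).comp hv, ?_⟩
  have huc := CompactSpace.uniformContinuous_of_continuous hfc
  rw [Metric.uniformContinuous_iff] at huc
  rw [Metric.tendsto_atTop] at hd ⊢
  intro ε hε
  obtain ⟨δ, hδ, hδε⟩ := huc ε hε
  obtain ⟨N, hN⟩ := hd δ hδ
  refine ⟨N, fun i hi => ?_⟩
  have h1 := hN i hi
  rw [Real.dist_eq, sub_zero, abs_of_nonneg dist_nonneg] at h1 ⊢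
  simp only [Function.comp_apply, ← zIter_factor T R f hf]
  exact hδε h1

/-- quasi-disjointness is preserved under inverse limits. -/
theorem stmt19 {Y : Type*} [MetricSpace Y] [CompactSpace Y]
    (Xs : ℕ → Type*) [∀ n, MetricSpace (Xs n)] [∀ n, CompactSpace (Xs n)]
    (Ts : ∀ n, Xs n ≃ₜ Xs n) (hmin : ∀ n, IsMinimalSystem (Ts n))
    (p : ∀ n, Xs (n + 1) → Xs n) (hp : ∀ n, IsFactorMap (Ts (n + 1)) (Ts n) (p n))
    {X : Type*} [MetricSpace X] [CompactSpace X] (T : X ≃ₜ X)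
    (φ : ∀ n, X → Xs n) (hφ : ∀ n, IsFactorMap T (Ts n) (φ n))
    (hcompat : ∀ n x, p n (φ (n + 1) x) = φ n x)
    (hsep : ∀ x y : X, (∀ n, φ n x = φ n y) → x = y)
    (hlim : ∀ s : (∀ n, Xs n), (∀ n, p n (s (n + 1)) = s n) → ∃ x : X, ∀ n, φ n x = s n)
    (S : Y ≃ₜ Y) (hY : IsMinimalSystem S)
    (hQD : ∀ n, QuasiDisjoint (Ts n) S) :
    QuasiDisjoint T S := by
  intro J hJ hFull
  obtain ⟨hJcl, hJinv, hJfst, hJsnd⟩ := hJ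
  have hcomp : ∀ m n, m ≤ n → ∀ u v : X, φ n u = φ n v → φ m u = φ m v := by
    intro m n hmn
    induction n, hmn using Nat.le_induction with
    | base => exact fun u v h => h
    | succ n hmn ih =>
      intro u v h
      exact ih u v (by rw [← hcompat n u, ← hcompat n v, h])
  have hJcpt : IsCompact J := hJcl.isCompact
  have hJn : ∀ n, (fun q : X × Y => (φ n q.1, q.2)) '' J = Set.univ := by
    intro n
    set f : X × Y → Xs n × Y := fun q => (φ n q.1, q.2) with hf
    have hfc : Continuous f := ((hφ n).1.comp continuous_fst).prodMk continuous_snd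
    apply hQD n
    · refine ⟨(hJcpt.image hfc).isClosed, ?_, ?_, ?_⟩
      · have hcomm : ((Ts n).prodCongr S) ∘ f = f ∘ (T.prodCongr S) := by
          funext q
          simp [f, (hφ n).2.2]
        rw [← Set.image_comp, hcomm, Set.image_comp, hJinv]
      · have : Prod.fst ∘ f = φ n ∘ Prod.fst := rfl
        rw [← Set.image_comp, this, Set.image_comp, hJfst, Set.image_univ,
          (hφ n).2.1.range_eq]
      · have : Prod.snd ∘ f = Prod.snd := rfl
        rw [← Set.image_comp, this, hJsnd]
    · intro xn y
      obtain ⟨x, rfl⟩ := (hφ n).2.1 xn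
      obtain ⟨q, hq, h1, h2⟩ := hFull x y
      exact ⟨(φ n q.1, q.2), ⟨q, hq, rfl⟩,
        rp_factor T (Ts n) (φ n) (hφ n).1 (hφ n).2.2 h1, h2⟩
  rw [Set.eq_univ_iff_forall]
  rintro ⟨x, y⟩
  have hstep : ∀ n, ∃ a : X, (a, y) ∈ J ∧ φ n a = φ n x := by
    intro n
    have : (φ n x, y) ∈ (fun q : X × Y => (φ n q.1, q.2)) '' J := by
      rw [hJn n]; trivial
    obtain ⟨⟨q1, q2⟩, hq, heq⟩ := this
    simp only [Prod.mk.injEq] at heq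
    exact ⟨q1, heq.2 ▸ hq, heq.1⟩
  choose a haJ haφ using hstep
  obtain ⟨w, -, ψ, hψ, hconv⟩ :=
    isCompact_univ.tendsto_subseq (fun n => Set.mem_univ (a n))
  have hwx : w = x := by
    apply hsep
    intro m
    have h1 : Tendsto (fun k => φ m (a (ψ k))) atTop (𝓝 (φ m w)) :=
      ((hφ m).1.tendsto w).comp hconv
    have h2 : ∀ᶠ k in atTop, φ m (a (ψ k)) = φ m x :=
      eventually_atTop.mpr ⟨m, fun k hk =>
        hcomp m (ψ k) (hk.trans hψ.le_apply) _ _ (haφ (ψ k))⟩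
    exact tendsto_nhds_unique (h1.congr' h2) tendsto_const_nhds
  have htend : Tendsto (fun k => (a (ψ k), y)) atTop (𝓝 (x, y)) := by
    rw [← hwx]
    exact hconv.prodMk_nhds tendsto_const_nhds
  exact hJcl.mem_of_tendsto htend (Filter.Eventually.of_forall fun k => haJ (ψ k))
end
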